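/- For every n ≥ 2, the number of isomorphism classes of binary rooted phylogenetic trees with leaves bijectively labeled by {1,...,n} equals the double factorial (2n-3)!! = (2n-3)(2n-5)···3·1. -/

import Mathlib

/-- Binary rooted trees with ℕ-labeled leaves. -/
inductive PTree : Type
  | leaf : ℕ → PTree
  | node : PTree → PTree → PTree

namespace PTree

/-- The set of leaf labels of a tree. -/
def leafSet : PTree → Finset ℕ
  | leaf x => {x}
  | node l r => leafSet l ∪ leafSet r

/-- A tree is a phylogenetic tree if at every internal node the leaf label sets of the
two subtrees are disjoint (so leaves are bijectively labeled). -/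
def isPhylo : PTree → Prop
  | leaf _ => True
  | node l r => isPhylo l ∧ isPhylo r ∧ Disjoint (leafSet l) (leafSet r)

/-- Canonical ordered representative of an isomorphism class of (unordered)
phylogenetic trees: at each internal node, the subtree containing the smallest
label comes first. -/
def canonical : PTree → Prop
  | leaf _ => True
  | node l r => canonical l ∧ canonical r ∧ (leafSet l).min < (leafSet r).min

/-- `t` represents an isomorphism class of phylogenetic trees on the taxon set `S`. -/
def isTreeOn (S : Finset ℕ) (t : PTree) : Prop :=
  isPhylo t ∧ canonical t ∧ leafSet t = S

/-- The number of leaves of a tree. -/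
def numLeaves : PTree → ℕ
  | leaf _ => 1
  | node l r => numLeaves l + numLeaves r

/-- The Colless index: sum over internal nodes of |κ(left child) − κ(right child)|. -/
def colless : PTree → ℕ
  | leaf _ => 0
  | node l r => colless l + colless r + ((numLeaves l : ℤ) - (numLeaves r : ℤ)).natAbs

/-- Product over internal nodes `v` of `1/(κ(v) − 1)`. -/
def yuleProd : PTree → ℚ
  | leaf _ => 1
  | node l r => (1 / ((numLeaves l + numLeaves r : ℕ) - 1 : ℚ)) * yuleProd l * yuleProd r

/-- The probability of a phylogenetic tree with `n` leaves under the Yule model: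
`2^(n-1)/n! · ∏_{v internal} 1/(κ(v)−1)`. -/
def yule (t : PTree) : ℚ :=
  2 ^ (numLeaves t - 1) / (Nat.factorial (numLeaves t) : ℚ) * yuleProd t

/-- The depth of the leaf labeled `x` in the tree (number of arcs from the root). -/
def depthOf (x : ℕ) : PTree → ℕ
  | leaf _ => 0
  | node l r => if x ∈ leafSet l then depthOf x l + 1 else depthOf x r + 1

/-- The Sackin index: sum of the depths of the leaves. -/
def sackin (t : PTree) : ℕ := ∑ x ∈ leafSet t, depthOf x t

/-- Sum over internal nodes `v` of the number of descendant leaves `κ(v)`. -/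
def kappaSum : PTree → ℕ
  | leaf _ => 0
  | node l r => kappaSum l + kappaSum r + (numLeaves l + numLeaves r)

/-- The number of (isomorphism classes of) phylogenetic trees on `{1,…,n}`
in which leaf `1` has depth `k`. -/
noncomputable def ckn (n k : ℕ) : ℕ :=
  Nat.card {t : PTree // isTreeOn (Finset.Icc 1 n) t ∧ depthOf 1 t = k}

end PTree

-- AUX START
deriving instance DecidableEq for PTree

namespace PTree

lemma leafSet_nonempty (t : PTree) : (leafSet t).Nonempty := by
  induction t with
  | leaf x => exact ⟨x, by simp [leafSet]⟩
  | node l r ihl ihr => exact ihl.mono (by simp [leafSet, Finset.subset_union_left])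

/-- insert a new leaf `m` above every subtree (including the whole tree). -/
def insAll (m : ℕ) : PTree → List PTree
  | leaf x => [node (leaf x) (leaf m)]
  | node l r => node (node l r) (leaf m) ::
      ((insAll m l).map (fun l' => node l' r) ++ (insAll m r).map (fun r' => node l r'))

/-- delete the leaf labeled `m`. -/
def del (m : ℕ) : PTree → PTree
  | leaf x => leaf x
  | node l r =>
      if leafSet r = {m} then l
      else if leafSet l = {m} then r
      else node (del m l) (del m r)

lemma leafSet_insAll {m : ℕ} {t : PTree} : ∀ u ∈ insAll m t, leafSet u = leafSet t ∪ {m} := by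
  induction t with
  | leaf x => intro u hu; simp [insAll] at hu; subst hu; simp [leafSet]
  | node l r ihl ihr =>
    intro u hu
    simp only [insAll, List.mem_cons, List.mem_append, List.mem_map] at hu
    rcases hu with rfl | ⟨l', hl', rfl⟩ | ⟨r', hr', rfl⟩
    · simp [leafSet]
    · rw [leafSet, ihl l' hl']; simp only [leafSet]; first | ac_rfl | simp
    · rw [leafSet, ihr r' hr']; simp only [leafSet]; first | ac_rfl | simp

lemma isPhylo_insAll {m : ℕ} {t : PTree} (ht : isPhylo t) (hm : m ∉ leafSet t) :
    ∀ u ∈ insAll m t, isPhylo u := by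
  induction t with
  | leaf x =>
    intro u hu; simp [insAll] at hu; subst hu
    simp [leafSet] at hm
    exact ⟨trivial, trivial, by simp [leafSet]; omega⟩
  | node l r ihl ihr =>
    obtain ⟨hl, hr, hd⟩ := ht
    simp only [leafSet, Finset.mem_union, not_or] at hm
    intro u hu
    simp only [insAll, List.mem_cons, List.mem_append, List.mem_map] at hu
    rcases hu with rfl | ⟨l', hl', rfl⟩ | ⟨r', hr', rfl⟩
    · refine ⟨⟨hl, hr, hd⟩, trivial, ?_⟩
      simp [leafSet, Finset.disjoint_singleton_right, hm.1, hm.2]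
    · refine ⟨ihl hl hm.1 l' hl', hr, ?_⟩
      rw [leafSet_insAll l' hl']
      simp [Finset.disjoint_union_left, hd, Finset.disjoint_singleton_left, hm.2]
    · refine ⟨hl, ihr hr hm.2 r' hr', ?_⟩
      rw [leafSet_insAll r' hr']
      simp [Finset.disjoint_union_right, hd, Finset.disjoint_singleton_right, hm.1]

lemma min_lt_coe_of_forall {A : Finset ℕ} (hA : A.Nonempty) {m : ℕ}
    (h : ∀ x ∈ A, x < m) : A.min < (m : WithTop ℕ) := by
  rw [← Finset.coe_min' hA]
  exact WithTop.coe_lt_coe.mpr (h _ (Finset.min'_mem A hA))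

lemma min_union_singleton {A : Finset ℕ} (hA : A.Nonempty) {m : ℕ}
    (h : ∀ x ∈ A, x < m) : (A ∪ {m}).min = A.min := by
  rw [Finset.min_union]
  simp only [Finset.min_singleton]
  exact inf_eq_left.mpr (le_of_lt (min_lt_coe_of_forall hA h))

lemma canonical_insAll {m : ℕ} {t : PTree} (hc : canonical t)
    (hm : ∀ x ∈ leafSet t, x < m) : ∀ u ∈ insAll m t, canonical u := by
  induction t with
  | leaf x =>
    intro u hu; simp [insAll] at hu; subst hu
    refine ⟨trivial, trivial, ?_⟩
    exact min_lt_coe_of_forall (leafSet_nonempty _) hm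
  | node l r ihl ihr =>
    obtain ⟨hl, hr, hlr⟩ := hc
    have hml : ∀ x ∈ leafSet l, x < m := fun x hx => hm x (by simp [leafSet, hx])
    have hmr : ∀ x ∈ leafSet r, x < m := fun x hx => hm x (by simp [leafSet, hx])
    intro u hu
    simp only [insAll, List.mem_cons, List.mem_append, List.mem_map] at hu
    rcases hu with rfl | ⟨l', hl', rfl⟩ | ⟨r', hr', rfl⟩
    · exact ⟨⟨hl, hr, hlr⟩, trivial,
        min_lt_coe_of_forall (leafSet_nonempty _) hm⟩
    · refine ⟨ihl hl hml l' hl', hr, ?_⟩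
      rw [leafSet_insAll l' hl', min_union_singleton (leafSet_nonempty l) hml]
      exact hlr
    · refine ⟨hl, ihr hr hmr r' hr', ?_⟩
      rw [leafSet_insAll r' hr', min_union_singleton (leafSet_nonempty r) hmr]
      exact hlr

lemma leafSet_ne_singleton_of_not_mem {t : PTree} {m : ℕ} (hm : m ∉ leafSet t) :
    leafSet t ≠ {m} := by
  intro h
  exact hm (by rw [h]; exact Finset.mem_singleton_self m)

lemma del_of_not_mem {m : ℕ} {t : PTree} (hm : m ∉ leafSet t) : del m t = t := by
  induction t with
  | leaf x => rfl
  | node l r ihl ihr =>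
    simp only [leafSet, Finset.mem_union, not_or] at hm
    rw [del, if_neg (leafSet_ne_singleton_of_not_mem hm.2),
      if_neg (leafSet_ne_singleton_of_not_mem hm.1), ihl hm.1, ihr hm.2]

lemma del_insAll {m : ℕ} {t : PTree} (hm : m ∉ leafSet t) :
    ∀ u ∈ insAll m t, del m u = t := by
  induction t with
  | leaf x =>
    intro u hu; simp [insAll] at hu; subst hu
    simp [del, leafSet]
  | node l r ihl ihr =>
    simp only [leafSet, Finset.mem_union, not_or] at hm
    intro u hu
    simp only [insAll, List.mem_cons, List.mem_append, List.mem_map] at hu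
    rcases hu with rfl | ⟨l', hl', rfl⟩ | ⟨r', hr', rfl⟩
    · simp [del, leafSet]
    · have h1 : leafSet r ≠ {m} := leafSet_ne_singleton_of_not_mem hm.2
      have h2 : leafSet l' ≠ {m} := by
        rw [leafSet_insAll l' hl']
        intro h
        obtain ⟨x, hx⟩ := leafSet_nonempty l
        have hxm : x ∈ leafSet l ∪ {m} := by simp [hx]
        rw [h, Finset.mem_singleton] at hxm
        subst hxm; exact hm.1 hx
      rw [del, if_neg h1, if_neg h2, ihl hm.1 l' hl',
        del_of_not_mem hm.2]
    · have h1 : leafSet r' ≠ {m} := by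
        rw [leafSet_insAll r' hr']
        intro h
        obtain ⟨x, hx⟩ := leafSet_nonempty r
        have hxm : x ∈ leafSet r ∪ {m} := by simp [hx]
        rw [h, Finset.mem_singleton] at hxm
        subst hxm; exact hm.2 hx
      have h2 : leafSet l ≠ {m} := leafSet_ne_singleton_of_not_mem hm.1
      rw [del, if_neg h1, if_neg h2, del_of_not_mem hm.1, ihr hm.2 r' hr']

lemma mem_leafSet_insAll {m : ℕ} {t : PTree} {u : PTree} (hu : u ∈ insAll m t) :
    m ∈ leafSet u := by
  rw [leafSet_insAll u hu]; simp

/-- every output of insAll is a node -/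
lemma insAll_ne_leaf {m : ℕ} {t : PTree} {x : ℕ} : leaf x ∉ insAll m t := by
  induction t with
  | leaf y => simp [insAll]
  | node l r ihl ihr =>
    simp only [insAll, List.mem_cons, List.mem_append, List.mem_map]
    rintro (h | ⟨l', _, h⟩ | ⟨r', _, h⟩) <;> exact PTree.noConfusion h

lemma numLeaves_pos (t : PTree) : 1 ≤ numLeaves t := by
  induction t with
  | leaf x => exact le_refl 1
  | node l r ihl ihr => rw [numLeaves]; omega

lemma nodup_insAll {m : ℕ} {t : PTree} (hm : m ∉ leafSet t) : (insAll m t).Nodup := by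
  induction t with
  | leaf x => simp [insAll]
  | node l r ihl ihr =>
    simp only [leafSet, Finset.mem_union, not_or] at hm
    rw [insAll, List.nodup_cons, List.nodup_append]
    refine ⟨?_, (ihl hm.1).map ?_, (ihr hm.2).map ?_, ?_⟩
    · intro hmem
      rcases List.mem_append.mp hmem with h | h <;> rw [List.mem_map] at h
      · obtain ⟨l', _, heq⟩ := h
        injection heq with h1 h2
        exact hm.2 (by rw [h2]; simp [leafSet])
      · obtain ⟨r', hr', heq⟩ := h
        injection heq with h1 h2
        exact insAll_ne_leaf (h2 ▸ hr')
    · intro a b hab; cases hab; rfl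
    · intro a b hab; cases hab; rfl
    · intro u hul v hur huv; subst huv
      rw [List.mem_map] at hul hur
      obtain ⟨l', hl', rfl⟩ := hul
      obtain ⟨r', hr', heq⟩ := hur
      injection heq with h1 h2
      subst h1
      exact hm.1 (mem_leafSet_insAll hl')

lemma length_insAll (m : ℕ) (t : PTree) : (insAll m t).length = 2 * numLeaves t - 1 := by
  induction t with
  | leaf x => simp [insAll, numLeaves]
  | node l r ihl ihr =>
    have h1 := numLeaves_pos l
    have h2 := numLeaves_pos r
    simp only [insAll, List.length_cons, List.length_append, List.length_map, ihl, ihr, numLeaves]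
    omega

lemma min_sdiff_singleton {A : Finset ℕ} {m : ℕ} (hm : m ∈ A)
    (h : ∀ x ∈ A, x ≠ m → x < m) (hne : A ≠ {m}) : (A \ {m}).min = A.min := by
  have hAne : A.Nonempty := ⟨m, hm⟩
  obtain ⟨y, hy, hym⟩ : ∃ y ∈ A, y ≠ m := by
    by_contra hc
    push_neg at hc
    exact hne (Finset.eq_singleton_iff_unique_mem.mpr ⟨hm, hc⟩)
  have hylt : y < m := h y hy hym
  apply le_antisymm
  · have hmin : A.min' hAne ∈ A := Finset.min'_mem A hAne
    have hminle : A.min' hAne ≤ y := Finset.min'_le A y hy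
    have : A.min' hAne ≠ m := by omega
    have : A.min' hAne ∈ A \ {m} := Finset.mem_sdiff.mpr ⟨hmin, by simpa⟩
    rw [← Finset.coe_min' hAne]
    exact Finset.min_le this
  · exact Finset.le_min fun a ha => Finset.min_le (Finset.mem_sdiff.mp ha).1

lemma min_mono_subset {A B : Finset ℕ} (h : A ⊆ B) : B.min ≤ A.min :=
  Finset.le_min fun a ha => Finset.min_le (h ha)

/-- Direction B: every canonical phylo tree containing a maximal label `m`
which is not alone arises from inserting `m` into its deletion. -/
lemma del_spec {m : ℕ} : ∀ {t : PTree}, isPhylo t → canonical t → m ∈ leafSet t →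
    (∀ x ∈ leafSet t, x ≤ m) → leafSet t ≠ {m} →
    isPhylo (del m t) ∧ canonical (del m t) ∧ leafSet (del m t) = leafSet t \ {m} ∧
      t ∈ insAll m (del m t) := by
  intro t
  induction t with
  | leaf x =>
    intro _ _ hmem _ hne
    simp [leafSet] at hmem
    exact absurd (by rw [leafSet, hmem]) hne
  | node l r ihl ihr =>
    intro hp hc hmem hmax hne
    obtain ⟨hpl, hpr, hd⟩ := hp
    obtain ⟨hcl, hcr, hlr⟩ := hc
    have hmaxl : ∀ x ∈ leafSet l, x ≤ m := fun x hx => hmax x (by simp [leafSet, hx])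
    have hmaxr : ∀ x ∈ leafSet r, x ≤ m := fun x hx => hmax x (by simp [leafSet, hx])
    have hLne : leafSet l ≠ {m} := by
      intro h
      have h1 : (leafSet l).min = (m : WithTop ℕ) := by rw [h]; simp
      have h2 : (leafSet r).min ≤ (m : WithTop ℕ) := by
        obtain ⟨y, hy⟩ := leafSet_nonempty r
        exact le_trans (Finset.min_le hy) (WithTop.coe_le_coe.mpr (hmaxr y hy))
      rw [h1] at hlr
      exact absurd (lt_of_lt_of_le hlr h2) (lt_irrefl _)
    rw [leafSet, Finset.mem_union] at hmem
    by_cases hRm : leafSet r = {m}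
    · -- r = leaf m, delete gives l
      have hrleaf : r = leaf m := by
        cases r with
        | leaf y => simp [leafSet] at hRm; rw [hRm]
        | node a b =>
          exfalso
          obtain ⟨x, hx⟩ := leafSet_nonempty a
          obtain ⟨y, hy⟩ := leafSet_nonempty b
          have hxm : x = m := by
            have : x ∈ leafSet (node a b) := by simp [leafSet, hx]
            rw [hRm] at this; simpa using this
          have hym : y = m := by
            have : y ∈ leafSet (node a b) := by simp [leafSet, hy]
            rw [hRm] at this; simpa using this
          obtain ⟨_, _, hab⟩ := hpr
          exact Finset.disjoint_left.mp hab hx (by rw [hym] at hy; rw [hxm]; exact hy)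
      have hdel : del m (node l r) = l := by rw [del, if_pos hRm]
      have hmnl : m ∉ leafSet l := by
        intro h
        exact Finset.disjoint_left.mp hd h (by rw [hRm]; simp)
      refine ⟨by rw [hdel]; exact hpl, by rw [hdel]; exact hcl, ?_, ?_⟩
      · rw [hdel, leafSet, hRm, Finset.union_sdiff_self]
        exact (Finset.sdiff_eq_self_of_disjoint (by simpa [Finset.disjoint_singleton_right])).symm
      · rw [hdel, hrleaf]
        cases l with
        | leaf x => simp [insAll]
        | node a b => rw [insAll]; exact List.mem_cons_self
    · -- m is deeper
      rcases hmem with hml | hmr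
      · -- m in left subtree
        have hmnr : m ∉ leafSet r := fun h => Finset.disjoint_left.mp hd hml h
        have hdel : del m (node l r) = node (del m l) r := by
          rw [del, if_neg hRm, if_neg hLne, del_of_not_mem hmnr]
        have hmaxl' : ∀ x ∈ leafSet l, x ≠ m → x < m :=
          fun x hx hxm => lt_of_le_of_ne (hmaxl x hx) hxm
        obtain ⟨ih1, ih2, ih3, ih4⟩ := ihl hpl hcl hml hmaxl hLne
        rw [hdel]
        refine ⟨⟨ih1, hpr, ?_⟩, ⟨ih2, hcr, ?_⟩, ?_, ?_⟩
        · rw [ih3]; exact Finset.disjoint_of_subset_left (Finset.sdiff_subset) hd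
        · rw [ih3, min_sdiff_singleton hml hmaxl' hLne]; exact hlr
        · simp only [leafSet]
          rw [Finset.union_sdiff_distrib, ih3,
            Finset.sdiff_eq_self_of_disjoint (Finset.disjoint_singleton_right.mpr hmnr)]
        · rw [insAll]
          refine List.mem_cons_of_mem _ (List.mem_append_left _ ?_)
          exact List.mem_map_of_mem ih4
      · -- m in right subtree
        have hmnl : m ∉ leafSet l := fun h => Finset.disjoint_left.mp hd h hmr
        have hdel : del m (node l r) = node l (del m r) := by
          rw [del, if_neg hRm, if_neg hLne, del_of_not_mem hmnl]
        have hmaxr' : ∀ x ∈ leafSet r, x ≠ m → x < m :=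
          fun x hx hxm => lt_of_le_of_ne (hmaxr x hx) hxm
        obtain ⟨ih1, ih2, ih3, ih4⟩ := ihr hpr hcr hmr hmaxr hRm
        rw [hdel]
        refine ⟨⟨hpl, ih1, ?_⟩, ⟨hcl, ih2, ?_⟩, ?_, ?_⟩
        · rw [ih3]; exact Finset.disjoint_of_subset_right (Finset.sdiff_subset) hd
        · rw [ih3]
          exact lt_of_lt_of_le hlr (min_mono_subset Finset.sdiff_subset)
        · simp only [leafSet]
          rw [Finset.union_sdiff_distrib, ih3,
            Finset.sdiff_eq_self_of_disjoint (Finset.disjoint_singleton_right.mpr hmnl)]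
        · rw [insAll]
          refine List.mem_cons_of_mem _ (List.mem_append_right _ ?_)
          exact List.mem_map_of_mem ih4

lemma numLeaves_eq_card {t : PTree} (h : isPhylo t) : numLeaves t = (leafSet t).card := by
  induction t with
  | leaf x => simp [numLeaves, leafSet]
  | node l r ihl ihr =>
    obtain ⟨hl, hr, hd⟩ := h
    rw [numLeaves, leafSet, Finset.card_union_of_disjoint hd, ihl hl, ihr hr]

lemma eq_leaf_of_leafSet_singleton {t : PTree} {x : ℕ} (hp : isPhylo t)
    (h : leafSet t = {x}) : t = leaf x := by
  cases t with
  | leaf y => simp [leafSet] at h; rw [h]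
  | node a b =>
    exfalso
    have hc := numLeaves_eq_card hp
    rw [h, Finset.card_singleton, numLeaves] at hc
    have := numLeaves_pos a
    have := numLeaves_pos b
    omega

/-- the canonical phylogenetic trees on `Finset.Icc 1 n`. -/
def treesIcc : ℕ → Finset PTree
  | 0 => ∅
  | 1 => {leaf 1}
  | (n+2) => (treesIcc (n+1)).biUnion (fun t => (insAll (n+2) t).toFinset)

lemma mem_treesIcc : ∀ n : ℕ, 1 ≤ n → ∀ t : PTree,
    (t ∈ treesIcc n ↔ isTreeOn (Finset.Icc 1 n) t) := by
  intro n
  induction n with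
  | zero => omega
  | succ n ih =>
    intro _ t
    match n, ih with
    | 0, _ =>
      rw [treesIcc]
      simp only [Finset.mem_singleton, Finset.Icc_self]
      constructor
      · rintro rfl
        exact ⟨trivial, trivial, rfl⟩
      · rintro ⟨hp, _, hls⟩
        exact eq_leaf_of_leafSet_singleton hp hls
    | Nat.succ k, ih =>
      have ihk := ih (by omega)
      have hIcc : Finset.Icc 1 (k+1) ∪ {(k+2)} = Finset.Icc 1 (k+2) := by
        ext x; simp only [Finset.mem_union, Finset.mem_Icc, Finset.mem_singleton]; omega
      show t ∈ treesIcc (k+2) ↔ isTreeOn (Finset.Icc 1 (k+2)) t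
      rw [treesIcc, Finset.mem_biUnion]
      constructor
      · rintro ⟨t', ht', hmem⟩
        rw [List.mem_toFinset] at hmem
        obtain ⟨hp, hc, hls⟩ := (ihk t').mp ht'
        have hnm : (k+2) ∉ leafSet t' := by
          rw [hls]; simp only [Finset.mem_Icc]; omega
        have hlt : ∀ x ∈ leafSet t', x < (k+2) := by
          intro x hx; rw [hls] at hx; simp only [Finset.mem_Icc] at hx; omega
        refine ⟨isPhylo_insAll hp hnm t hmem, canonical_insAll hc hlt t hmem, ?_⟩
        rw [leafSet_insAll t hmem, hls, hIcc]
      · rintro ⟨hp, hc, hls⟩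
        have hmem : (k+2) ∈ leafSet t := by
          rw [hls]; simp only [Finset.mem_Icc]; omega
        have hmax : ∀ x ∈ leafSet t, x ≤ (k+2) := by
          intro x hx; rw [hls] at hx; simp only [Finset.mem_Icc] at hx; omega
        have hne : leafSet t ≠ {(k+2)} := by
          rw [hls]
          intro h
          have h1 : (1 : ℕ) ∈ Finset.Icc 1 (k+2) := by simp
          rw [h, Finset.mem_singleton] at h1
          omega
        obtain ⟨h1, h2, h3, h4⟩ := del_spec hp hc hmem hmax hne
        refine ⟨del (k+2) t, (ihk _).mpr ⟨h1, h2, ?_⟩, List.mem_toFinset.mpr h4⟩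
        rw [h3, hls]
        ext x
        simp only [Finset.mem_sdiff, Finset.mem_Icc, Finset.mem_singleton]
        omega

lemma card_treesIcc : ∀ n : ℕ, 1 ≤ n →
    (treesIcc n).card = Nat.doubleFactorial (2 * n - 3) := by
  intro n
  induction n with
  | zero => omega
  | succ n ih =>
    intro _
    match n, ih with
    | 0, _ => rw [treesIcc]; simp [Nat.doubleFactorial]
    | Nat.succ k, ih =>
      have ihk := ih (by omega)
      have hmem := mem_treesIcc (k+1) (by omega)
      have hnotmem : ∀ t ∈ treesIcc (k+1), (k+2) ∉ leafSet t := by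
        intro t ht
        obtain ⟨_, _, hls⟩ := (hmem t).mp ht
        rw [hls]; simp only [Finset.mem_Icc]; omega
      show (treesIcc (k+2)).card = Nat.doubleFactorial (2 * (k+2) - 3)
      rw [treesIcc]
      rw [Finset.card_biUnion ?disj]
      case disj =>
        intro t1 h1 t2 h2 hne
        rw [Function.onFun, Finset.disjoint_left]
        intro u hu1 hu2
        rw [List.mem_toFinset] at hu1 hu2
        exact hne ((del_insAll (hnotmem t1 h1) u hu1).symm.trans
          (del_insAll (hnotmem t2 h2) u hu2))
      have hcard : ∀ t ∈ treesIcc (k+1), (insAll (k+2) t).toFinset.card = 2 * k + 1 := by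
        intro t ht
        obtain ⟨hp, _, hls⟩ := (hmem t).mp ht
        rw [List.toFinset_card_of_nodup (nodup_insAll (hnotmem t ht)), length_insAll,
          numLeaves_eq_card hp, hls, Nat.card_Icc]
        omega
      rw [Finset.sum_congr rfl hcard, Finset.sum_const, smul_eq_mul, ihk]
      have key : Nat.doubleFactorial (2 * (k + 2) - 3)
          = Nat.doubleFactorial (2 * (k + 1) - 3) * (2 * k + 1) := by
        cases k with
        | zero => simp [Nat.doubleFactorial]
        | succ j =>
          have h : 2 * (j + 1 + 2) - 3 = (2 * (j + 1 + 1) - 3) + 2 := by omega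
          rw [h, Nat.doubleFactorial_add_two,
            show 2 * (j + 1 + 1) - 3 + 2 = 2 * (j + 1) + 1 from by omega, Nat.mul_comm]
      rw [key]

end PTree



open PTree in
/-- For every n ≥ 2, the number of isomorphism classes of binary rooted phylogenetic
trees with leaves bijectively labeled by {1,…,n} is the double factorial (2n−3)!!. -/
theorem numPhyloTrees (n : ℕ) (hn : 2 ≤ n) :
    Nat.card {t : PTree // isTreeOn (Finset.Icc 1 n) t} = Nat.doubleFactorial (2 * n - 3) := by
  have hiff := mem_treesIcc n (by omega)
  have : Nat.card {t : PTree // isTreeOn (Finset.Icc 1 n) t}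
      = Nat.card {t : PTree // t ∈ treesIcc n} :=
    Nat.card_congr (Equiv.subtypeEquivRight (fun t => (hiff t).symm))
  rw [this, Nat.card_eq_finsetCard]
  exact card_treesIcc n (by omega)
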